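/- Let (K, |·|) be a non-Archimedean field and fix a real number r ∈ (0,1). On the set K_r of bi-infinite formal series Σ_{j∈ℤ} a_j ϖ^j with a_j ∈ K such that |a_j| r^j → 0 as |j| → ∞, the Gauss norm |Σ a_j ϖ^j|_r := max_j |a_j| r^j is a multiplicative non-Archimedean norm, i.e. it satisfies |x·y|_r = |x|_r · |y|_r and |x + y|_r ≤ max(|x|_r, |y|_r) for all x,y ∈ K_r. -/

import Mathlib

open Filter Topology

private lemma aux_attain {ι : Type*} [Nonempty ι] {h : ι → ℝ}
    (ht : Filter.Tendsto h Filter.cofinite (nhds 0)) (h0 : ∀ i, 0 ≤ h i) :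
    ∃ i, ∀ j, h j ≤ h i := by
  by_cases hp : ∃ j0, 0 < h j0
  · obtain ⟨j0, hj0⟩ := hp
    have hev : ∀ᶠ j in Filter.cofinite, h j < h j0 := ht.eventually_lt_const hj0
    have hfin : {j | h j0 ≤ h j}.Finite := by
      simpa only [not_lt] using Filter.eventually_cofinite.mp hev
    have hne : j0 ∈ hfin.toFinset := by simp
    obtain ⟨i, hiT, hi⟩ := hfin.toFinset.exists_max_image h ⟨j0, hne⟩
    refine ⟨i, fun j => ?_⟩
    by_cases hj : h j0 ≤ h j
    · exact hi j (hfin.mem_toFinset.mpr hj)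
    · exact le_trans (not_le.mp hj).le (hi j0 hne)
  · push_neg at hp
    exact ⟨Classical.arbitrary ι, fun j => le_trans (hp j) (h0 _)⟩

private lemma aux_bdd {ι : Type*} {h : ι → ℝ}
    (ht : Filter.Tendsto h Filter.cofinite (nhds 0)) (h0 : ∀ i, 0 ≤ h i) :
    BddAbove (Set.range h) := by
  rcases isEmpty_or_nonempty ι with hι | hι
  · simp [Set.range_eq_empty]
  · obtain ⟨i, hi⟩ := aux_attain ht h0
    exact ⟨h i, by rintro x ⟨j, rfl⟩; exact hi j⟩

private lemma aux_min {h : ℤ → ℝ}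
    (ht : Filter.Tendsto h Filter.cofinite (nhds 0)) (h0 : ∀ i, 0 ≤ h i)
    (hpos : 0 < ⨆ j, h j) :
    ∃ i, h i = (⨆ j, h j) ∧ ∀ p, p < i → h p < ⨆ j, h j := by
  have hbdd := aux_bdd ht h0
  obtain ⟨i1, hi1⟩ := aux_attain ht h0
  have hsup : (⨆ j, h j) = h i1 := le_antisymm (ciSup_le hi1) (le_ciSup hbdd i1)
  have hev : ∀ᶠ j in Filter.cofinite, h j < h i1 := ht.eventually_lt_const (hsup ▸ hpos)
  have hfin : {j | h i1 ≤ h j}.Finite := by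
    simpa only [not_lt] using Filter.eventually_cofinite.mp hev
  have hS : {j : ℤ | h j = h i1}.Finite := hfin.subset (fun j hj => hj.ge)
  have hne : i1 ∈ hS.toFinset := by simp
  have hTne : hS.toFinset.Nonempty := ⟨i1, hne⟩
  refine ⟨hS.toFinset.min' hTne, ?_, ?_⟩
  · have hmem := hS.toFinset.min'_mem hTne
    rw [Set.Finite.mem_toFinset] at hmem
    rw [hsup]; exact hmem
  · intro p hp
    have hpT : p ∉ hS.toFinset := fun hmem =>
      absurd (hS.toFinset.min'_le p hmem) (not_le.mpr hp)
    have hpne : h p ≠ h i1 := by simpa [Set.Finite.mem_toFinset] using hpT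
    rw [hsup]
    exact lt_of_le_of_ne (hi1 p) hpne

/-- On the field of series `K_r` (bi-infinite series `Σ a_j ϖ^j` with
`‖a_j‖ r^j → 0` as `|j| → ∞`) over a non-Archimedean field `K`, the Gauss norm
`|Σ a_j ϖ^j|_r = max_j ‖a_j‖ r^j` is multiplicative (for the Cauchy product) and
satisfies the ultrametric inequality. -/
theorem stmt_5 {K : Type*} [NormedField K] [IsUltrametricDist K] [CompleteSpace K]
    (r : ℝ) (hr0 : 0 < r) (hr1 : r < 1)
    (gauss : (ℤ → K) → ℝ)
    (hgauss : ∀ a : ℤ → K, gauss a = ⨆ j : ℤ, ‖a j‖ * r ^ j)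
    (conv : (ℤ → K) → (ℤ → K) → ℤ → K)
    (hconv : ∀ (a b : ℤ → K) (m : ℤ),
      conv a b m = ∑' p : {p : ℤ × ℤ // p.1 + p.2 = m}, a p.val.1 * b p.val.2)
    (a b : ℤ → K)
    (ha : Filter.Tendsto (fun j : ℤ => ‖a j‖ * r ^ j) (Filter.cocompact ℤ) (nhds 0))
    (hb : Filter.Tendsto (fun j : ℤ => ‖b j‖ * r ^ j) (Filter.cocompact ℤ) (nhds 0)) :
    gauss (conv a b) = gauss a * gauss b ∧
      gauss (a + b) ≤ max (gauss a) (gauss b) := by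
  classical
  rw [cocompact_eq_cofinite] at ha hb
  have hrm : ∀ m : ℤ, (0:ℝ) < r ^ m := fun m => zpow_pos hr0 m
  set f : ℤ → ℝ := fun j => ‖a j‖ * r ^ j with hfdef
  set g : ℤ → ℝ := fun j => ‖b j‖ * r ^ j with hgdef
  have hf0 : ∀ j, 0 ≤ f j := fun j => mul_nonneg (norm_nonneg _) (hrm j).le
  have hg0 : ∀ j, 0 ≤ g j := fun j => mul_nonneg (norm_nonneg _) (hrm j).le
  have hfb := aux_bdd ha hf0
  have hgb := aux_bdd hb hg0
  set A := gauss a with hA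
  set B := gauss b with hB
  have hAeq : A = ⨆ j, f j := hgauss a
  have hBeq : B = ⨆ j, g j := hgauss b
  have hfA : ∀ j, f j ≤ A := fun j => hAeq ▸ le_ciSup hfb j
  have hgB : ∀ j, g j ≤ B := fun j => hBeq ▸ le_ciSup hgb j
  have hA0 : 0 ≤ A := le_trans (hf0 0) (hfA 0)
  have hB0 : 0 ≤ B := le_trans (hg0 0) (hgB 0)
  -- splitting of the scaled norm of a product term
  have hsplit : ∀ (m : ℤ) (p : {p : ℤ × ℤ // p.1 + p.2 = m}),
      ‖a p.val.1 * b p.val.2‖ * r ^ m = f p.val.1 * g p.val.2 := by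
    intro m p
    obtain ⟨⟨x, y⟩, rfl⟩ := p
    rw [norm_mul, zpow_add₀ (ne_of_gt hr0)]
    simp only [hfdef, hgdef]
    ring
  -- pointwise bound on the convolution
  have key_le : ∀ m : ℤ, ‖conv a b m‖ * r ^ m ≤ A * B := by
    intro m
    rw [hconv]
    have hterm : ∀ p : {p : ℤ × ℤ // p.1 + p.2 = m},
        ‖a p.val.1 * b p.val.2‖ ≤ A * B / r ^ m := by
      intro p
      rw [le_div_iff₀ (hrm m), hsplit m p]
      exact mul_le_mul (hfA _) (hgB _) (hg0 _) hA0
    have := IsUltrametricDist.norm_tsum_le_of_forall_le_of_nonneg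
      (div_nonneg (mul_nonneg hA0 hB0) (hrm m).le) hterm
    calc ‖∑' p : {p : ℤ × ℤ // p.1 + p.2 = m}, a p.val.1 * b p.val.2‖ * r ^ m
        ≤ (A * B / r ^ m) * r ^ m := mul_le_mul_of_nonneg_right this (hrm m).le
      _ = A * B := div_mul_cancel₀ _ (hrm m).ne'
  have hconv_bdd : BddAbove (Set.range fun m : ℤ => ‖conv a b m‖ * r ^ m) :=
    ⟨A * B, by rintro x ⟨m, rfl⟩; exact key_le m⟩
  have hle : gauss (conv a b) ≤ A * B := by
    rw [hgauss]; exact ciSup_le key_le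
  constructor
  · -- multiplicativity
    -- degenerate cases
    rcases eq_or_lt_of_le hA0 with hAz | hApos
    · have haz : ∀ j, a j = 0 := by
        intro j
        have h1 : f j ≤ 0 := (hfA j).trans hAz.ge
        have h2 : ‖a j‖ = 0 := by
          have := le_antisymm h1 (hf0 j)
          have := mul_eq_zero.mp this
          rcases this with h | h
          · exact h
          · exact absurd h (hrm j).ne'
        simpa using h2
      have hc : ∀ m, conv a b m = 0 := by
        intro m; rw [hconv]; simp [haz]
      rw [hgauss]
      simp only [hc, norm_zero, zero_mul, ciSup_const]
      rw [← hAz, zero_mul]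
    rcases eq_or_lt_of_le hB0 with hBz | hBpos
    · have hbz : ∀ j, b j = 0 := by
        intro j
        have h1 : g j ≤ 0 := (hgB j).trans hBz.ge
        have h2 : ‖b j‖ = 0 := by
          have := le_antisymm h1 (hg0 j)
          rcases mul_eq_zero.mp this with h | h
          · exact h
          · exact absurd h (hrm j).ne'
        simpa using h2
      have hc : ∀ m, conv a b m = 0 := by
        intro m; rw [hconv]; simp [hbz]
      rw [hgauss]
      simp only [hc, norm_zero, zero_mul, ciSup_const]
      rw [← hBz, mul_zero]
    -- main case : A, B > 0
    obtain ⟨i, hiA, hiMin⟩ := aux_min ha hf0 (hAeq ▸ hApos)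
    obtain ⟨k, hkB, hkMin⟩ := aux_min hb hg0 (hBeq ▸ hBpos)
    rw [← hAeq] at hiA hiMin
    rw [← hBeq] at hkB hkMin
    set m : ℤ := i + k with hm
    set P := {p : ℤ × ℤ // p.1 + p.2 = m} with hP
    set p0 : P := ⟨(i, k), rfl⟩ with hp0def
    set t : P → K := fun p => a p.val.1 * b p.val.2 with htdef
    have hinj : Function.Injective (fun p : P => p.val.1) := by
      rintro ⟨⟨p1, p2⟩, hp⟩ ⟨⟨q1, q2⟩, hq⟩ hpq
      simp only at hpq
      subst hpq
      have : p2 = q2 := by omega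
      subst this
      rfl
    have hfin_f : ∀ δ : ℝ, 0 < δ → {j : ℤ | δ ≤ f j}.Finite := by
      intro δ hδ
      simpa only [not_lt] using Filter.eventually_cofinite.mp (ha.eventually_lt_const hδ)
    -- the terms tend to zero cofinitely
    have ht0 : Filter.Tendsto t Filter.cofinite (nhds 0) := by
      rw [NormedAddCommGroup.tendsto_nhds_zero]
      intro ε hε
      rw [Filter.eventually_cofinite]
      set Cb : ℝ := max B 1 with hCbdef
      have hCb0 : (0:ℝ) < Cb := lt_of_lt_of_le one_pos (le_max_right _ _)
      have hCb : ∀ j, g j ≤ Cb := fun j => le_trans (hgB j) (le_max_left _ _)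
      set δ : ℝ := ε * r ^ m / Cb with hδdef
      have hδ : 0 < δ := div_pos (mul_pos hε (hrm m)) hCb0
      have hsub : {p : P | ¬ ‖t p‖ < ε} ⊆ (fun p : P => p.val.1) ⁻¹' {j | δ ≤ f j} := by
        intro p hp
        simp only [Set.mem_setOf_eq, not_lt] at hp
        simp only [Set.mem_preimage, Set.mem_setOf_eq]
        rw [hδdef, div_le_iff₀ hCb0]
        calc ε * r ^ m ≤ ‖t p‖ * r ^ m := mul_le_mul_of_nonneg_right hp (hrm m).le
          _ = f p.val.1 * g p.val.2 := hsplit m p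
          _ ≤ f p.val.1 * Cb := mul_le_mul_of_nonneg_left (hCb _) (hf0 _)
      exact ((hfin_f δ hδ).preimage hinj.injOn).subset hsub
    have hsum : Summable t := NonarchimedeanAddGroup.summable_of_tendsto_cofinite_zero ht0
    -- strict bound on all non-dominant terms
    have hstrict : ∀ p : P, p ≠ p0 → f p.val.1 * g p.val.2 < A * B := by
      intro p hp
      rcases lt_trichotomy p.val.1 i with h1 | h1 | h1
      · have hfs : f p.val.1 < A := hiMin _ h1
        calc f p.val.1 * g p.val.2 ≤ f p.val.1 * B :=
              mul_le_mul_of_nonneg_left (hgB _) (hf0 _)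
          _ < A * B := (mul_lt_mul_iff_left₀ hBpos).mpr hfs
      · exfalso
        apply hp
        have h2 : p.val.2 = k := by have := p.prop; omega
        exact Subtype.ext (show p.val = ((i, k) : ℤ × ℤ) from Prod.ext h1 h2)
      · have h2 : p.val.2 < k := by have := p.prop; omega
        have hgs : g p.val.2 < B := hkMin _ h2
        calc f p.val.1 * g p.val.2 ≤ A * g p.val.2 :=
              mul_le_mul_of_nonneg_right (hfA _) (hg0 _)
          _ < A * B := (mul_lt_mul_iff_right₀ hApos).mpr hgs
    -- the remainder after removing the dominant term
    set u : P → K := fun p => if p = p0 then 0 else t p with hudef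
    have hu_le_t : ∀ p, ‖u p‖ ≤ ‖t p‖ := by
      intro p
      by_cases hp : p = p0
      · simp [hudef, hp]
      · simp [hudef, hp]
    have hu0 : Filter.Tendsto (fun p => ‖u p‖) Filter.cofinite (nhds 0) :=
      squeeze_zero (fun p => norm_nonneg _) hu_le_t
        (tendsto_zero_iff_norm_tendsto_zero.mp ht0)
    have : Nonempty P := ⟨p0⟩
    obtain ⟨q, hq⟩ := aux_attain hu0 (fun p => norm_nonneg _)
    have hqlt : ‖u q‖ * r ^ m < A * B := by
      by_cases hq0 : q = p0
      · simp only [hudef, hq0, if_pos rfl, norm_zero, zero_mul]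
        exact mul_pos hApos hBpos
      · calc ‖u q‖ * r ^ m = ‖t q‖ * r ^ m := by rw [hudef]; simp [hq0]
          _ = f q.val.1 * g q.val.2 := hsplit m q
          _ < A * B := hstrict q hq0
    have htp0 : ‖t p0‖ * r ^ m = A * B := by
      rw [hsplit m p0]
      show f i * g k = A * B
      rw [hiA, hkB]
    have hrest : ‖∑' p, u p‖ ≤ ‖u q‖ :=
      IsUltrametricDist.norm_tsum_le_of_forall_le_of_nonneg (norm_nonneg _) hq
    have hlt_norm : ‖∑' p, u p‖ < ‖t p0‖ := by
      apply lt_of_le_of_lt hrest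
      have := hqlt.trans_eq htp0.symm
      exact lt_of_mul_lt_mul_right this (hrm m).le
    have hnorm_conv : ‖conv a b m‖ = ‖t p0‖ := by
      rw [hconv]
      have hts : (∑' p : P, a p.val.1 * b p.val.2) = ∑' p, t p := rfl
      rw [hts, Summable.tsum_eq_add_tsum_ite hsum p0]
      have hmax := IsUltrametricDist.norm_add_eq_max_of_norm_ne_norm
        (x := t p0) (y := ∑' p, u p) (fun h => absurd h.symm hlt_norm.ne)
      have : (∑' (p : P), if p = p0 then 0 else t p) = ∑' p, u p := rfl
      rw [this, hmax, max_eq_left hlt_norm.le]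
    have hge : A * B ≤ gauss (conv a b) := by
      rw [hgauss]
      refine le_ciSup_of_le hconv_bdd m ?_
      rw [hnorm_conv, htp0]
    exact le_antisymm hle hge
  · -- ultrametric inequality
    rw [hgauss]
    refine ciSup_le fun j => ?_
    have h1 : ‖(a + b) j‖ ≤ max ‖a j‖ ‖b j‖ := by
      simpa using IsUltrametricDist.norm_add_le_max (a j) (b j)
    calc ‖(a + b) j‖ * r ^ j ≤ max ‖a j‖ ‖b j‖ * r ^ j :=
          mul_le_mul_of_nonneg_right h1 (hrm j).le
      _ = max (f j) (g j) := max_mul_of_nonneg _ _ (hrm j).le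
      _ ≤ max A B := max_le_max (hfA j) (hgB j)
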